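/- arXiv:1704.02595 — 3 statements merged into one kernel-verified Lean document; each statement's English description precedes it below -/
import Mathlib

section
/- Let Γ be a finitely generated group and Z a coamenable uniformly recurrent subgroup of Γ. Then Z is sofic. -/
open scoped Classical

/-- Conjugation action of a group on its subgroups: `g • H = gHg⁻¹`. -/
def conjSub {Γ : Type*} [Group Γ] (g : Γ) (H : Subgroup Γ) : Subgroup Γ :=
  Subgroup.map (MulAut.conj g).toMonoidHom H

/-- The Chabauty-type topology on `Sub(Γ)`: the topology induced from the product
topology on `{0,1}^Γ` via `H ↦ (γ ↦ decide (γ ∈ H))`. -/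
noncomputable instance chabauty {Γ : Type*} [Group Γ] : TopologicalSpace (Subgroup Γ) :=
  TopologicalSpace.induced
    (fun H (g : Γ) => @decide (g ∈ H) (Classical.dec _)) inferInstance

/-- A uniformly recurrent subgroup: a nonempty, closed, conjugation-invariant subset of
`Sub(Γ)` on which every conjugation orbit is dense. -/
structure IsURS {Γ : Type*} [Group Γ] (Z : Set (Subgroup Γ)) : Prop where
  nonempty : Z.Nonempty
  closed : IsClosed Z
  invariant : ∀ g : Γ, ∀ H ∈ Z, conjSub g H ∈ Z
  minimal : ∀ H ∈ Z, ∀ K ∈ Z, K ∈ closure {L : Subgroup Γ | ∃ g : Γ, conjSub g H = L}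

/-- A subgroup `H ≤ Γ` is coamenable if the action of `Γ` on `Γ/H` is amenable: there is
a sequence of nonempty finite subsets `Fₖ ⊆ Γ/H` with `|g•Fₖ ∪ Fₖ|/|Fₖ| → 1` for all `g`. -/
noncomputable def Coamenable {Γ : Type*} [Group Γ] (H : Subgroup Γ) : Prop :=
  ∃ F : ℕ → Finset (Γ ⧸ H), (∀ k, (F k).Nonempty) ∧
    ∀ g : Γ, Filter.Tendsto
      (fun k => ((((F k).image (fun x => g • x)) ∪ F k).card : ℝ) / ((F k).card : ℝ))
      Filter.atTop (nhds 1)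

/-- The word length of an element of a free group (length of its reduced word). -/
def wordLength {n : ℕ} (w : FreeGroup (Fin n)) : ℕ := (FreeGroup.toWord w).length

/-- `p` is a `(Z,r)`-vertex: there is `H ∈ Z` such that words of length at most `r`
move `p` exactly as they move the base coset of `Γ/H`. -/
def IsZRVertex {Γ : Type} [Group Γ] {n : ℕ} (γ : Fin n → Γ) (Z : Set (Subgroup Γ))
    {V : Type} (ρ : FreeGroup (Fin n) →* Equiv.Perm V) (r : ℕ) (p : V) : Prop :=
  ∃ H ∈ Z, ∀ w w' : FreeGroup (Fin n), wordLength w ≤ r → wordLength w' ≤ r →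
    (ρ w p = ρ w' p ↔
      (QuotientGroup.mk (FreeGroup.lift γ w) : Γ ⧸ H) = QuotientGroup.mk (FreeGroup.lift γ w'))

/-- A URS `Z` is sofic (w.r.t. the generating tuple `γ`): for every `r ≥ 1` and `ε > 0`
there is a finite nonempty free-group set in which at least a `(1-ε)` proportion of the
points are `(Z,r)`-vertices. -/
def IsSoficURS {Γ : Type} [Group Γ] {n : ℕ} (γ : Fin n → Γ) (Z : Set (Subgroup Γ)) : Prop :=
  ∀ r : ℕ, 1 ≤ r → ∀ ε : ℝ, 0 < ε →
    ∃ (V : Type) (_ : Fintype V) (_ : Nonempty V)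
      (ρ : FreeGroup (Fin n) →* Equiv.Perm V),
      (1 - ε) * (Fintype.card V : ℝ) ≤
        ({p : V | IsZRVertex γ Z ρ r p}.ncard : ℝ)

open scoped Pointwise

section Aux

noncomputable def extPerm {α : Type} [Fintype α] (p q : α → Prop)
    (e : {x // p x} ≃ {x // q x}) : Equiv.Perm α :=
  (Equiv.sumCompl p).symm.trans
    ((e.sumCongr (Fintype.equivOfCardEq (by
      have h := Fintype.card_congr e
      rw [Fintype.card_subtype_compl, Fintype.card_subtype_compl, h]))).trans
      (Equiv.sumCompl q))

lemma extPerm_pos {α : Type} [Fintype α] (p q : α → Prop)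
    (e : {x // p x} ≃ {x // q x}) (x : α) (h : p x) :
    extPerm p q e x = ↑(e ⟨x, h⟩) := by
  simp only [extPerm, Equiv.trans_apply]
  rw [Equiv.sumCompl_symm_apply_of_pos (p := p) h]
  simp

lemma extPerm_inv {α : Type} [Fintype α] (p q : α → Prop)
    (e : {x // p x} ≃ {x // q x}) (y : α) (h : q y) :
    (extPerm p q e)⁻¹ y = ↑(e.symm ⟨y, h⟩) := by
  apply (extPerm p q e).injective
  rw [← Equiv.Perm.mul_apply, mul_inv_cancel, Equiv.Perm.one_apply]
  rw [extPerm_pos p q e _ (e.symm ⟨y, h⟩).2]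
  rw [Subtype.coe_eta, Equiv.apply_symm_apply]

lemma list_prod_mem_pow {G : Type} [Group G] {T : Finset G} (h1 : (1:G) ∈ T) :
    ∀ (M : List G) (r : ℕ), M.length ≤ r → (∀ a ∈ M, a ∈ T) → M.prod ∈ T ^ r := by
  intro M
  induction M with
  | nil => intro r _ _; simpa using Finset.one_mem_pow h1
  | cons a M ih =>
    intro r hr hmem
    cases r with
    | zero => simp at hr
    | succ k =>
      rw [List.prod_cons, pow_succ']
      exact Finset.mul_mem_mul (hmem a (by simp))
        (ih k (by simpa using hr) (fun b hb => hmem b (by simp [hb])))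

end Aux

/-- every coamenable URS of a finitely generated group is sofic. -/
theorem coamenable_urs_is_sofic
    {Γ : Type} [Group Γ] {n : ℕ} (γ : Fin n → Γ)
    (hgen : Subgroup.closure (Set.range γ) = ⊤)
    (hsym : ∀ i : Fin n, (γ i)⁻¹ ∈ Set.range γ)
    (Z : Set (Subgroup Γ)) (hZ : IsURS Z)
    (hcoam : ∀ H ∈ Z, Coamenable H) :
    IsSoficURS γ Z := by
  intro r _hr ε hε
  obtain ⟨H, hH⟩ := hZ.nonempty
  obtain ⟨Fo, hFone, hFol⟩ := hcoam H hH
  -- step functions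
  set sγ : Fin n × Bool → Γ := fun a => bif a.2 then γ a.1 else (γ a.1)⁻¹ with hsγdef
  set T : Finset Γ := insert 1 ((Finset.univ.image γ) ∪ (Finset.univ.image fun i => (γ i)⁻¹))
    with hTdef
  have h1T : (1:Γ) ∈ T := Finset.mem_insert_self _ _
  have hsγT : ∀ a : Fin n × Bool, sγ a ∈ T := by
    rintro ⟨i, b⟩
    cases b
    · show (γ i)⁻¹ ∈ T
      exact Finset.mem_insert_of_mem
        (Finset.mem_union_right _ (Finset.mem_image.2 ⟨i, Finset.mem_univ i, rfl⟩))
    · show γ i ∈ T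
      exact Finset.mem_insert_of_mem
        (Finset.mem_union_left _ (Finset.mem_image.2 ⟨i, Finset.mem_univ i, rfl⟩))
  set B : Finset Γ := T ^ r with hBdef
  have hBne : B.Nonempty := ⟨1, Finset.one_mem_pow h1T⟩
  have hBcard : (0:ℝ) < B.card := by exact_mod_cast Finset.card_pos.2 hBne
  have hball : ∀ M : List (Fin n × Bool), M.length ≤ r → (M.map sγ).prod ∈ B := by
    intro M hM
    exact list_prod_mem_pow h1T _ r (by simpa using hM) (by
      intro a ha
      obtain ⟨b, _, rfl⟩ := List.mem_map.1 ha
      exact hsγT b)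
  set δ : ℝ := ε / B.card with hδdef
  have hδ : 0 < δ := div_pos hε hBcard
  -- choose a good Følner set
  have hev : ∀ᶠ k in Filter.atTop, ∀ g ∈ B,
      ((((Fo k).image (fun x => g • x)) ∪ Fo k).card : ℝ) / ((Fo k).card : ℝ) < 1 + δ := by
    rw [Filter.eventually_all_finset]
    intro g _
    exact (hFol g).eventually_lt_const (by linarith)
  obtain ⟨k, hk⟩ := hev.exists
  set F : Finset (Γ ⧸ H) := Fo k with hFdef
  have hFne : F.Nonempty := hFone k
  have hFpos : (0:ℝ) < F.card := by exact_mod_cast Finset.card_pos.2 hFne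
  -- per-generator deficiency bound
  have hg : ∀ g ∈ B, ((F.filter fun x => g • x ∉ F).card : ℝ) < δ * F.card := by
    intro g hgB
    have h1 : ((F.image (fun x => g • x) ∪ F).card : ℝ) < (1 + δ) * F.card := by
      have := hk g hgB
      rwa [div_lt_iff₀ hFpos] at this
    have himg : (F.filter fun x => g • x ∉ F).card = ((F.image (fun x => g • x)) \ F).card := by
      rw [← Finset.card_image_of_injective (F.filter fun x => g • x ∉ F)
        (MulAction.injective g)]
      congr 1
      ext y
      simp only [Finset.mem_image, Finset.mem_filter, Finset.mem_sdiff]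
      constructor
      · rintro ⟨x, ⟨hx, hgx⟩, rfl⟩
        exact ⟨⟨x, hx, rfl⟩, hgx⟩
      · rintro ⟨⟨x, hx, rfl⟩, hy⟩
        exact ⟨x, ⟨hx, hy⟩, rfl⟩
    have hsd : (((F.image (fun x => g • x)) \ F).card : ℝ)
        = ((F.image (fun x => g • x) ∪ F).card : ℝ) - F.card := by
      have := Finset.card_sdiff_add_card (F.image (fun x => g • x)) F
      have := congrArg (fun m : ℕ => (m : ℝ)) this
      push_cast at this
      linarith
    rw [himg, hsd]
    linarith
  -- the bad set
  set Bad : Finset (Γ ⧸ H) := F.filter (fun x => ∃ g ∈ B, g • x ∉ F) with hBaddef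
  have hBadcard : (Bad.card : ℝ) < ε * F.card := by
    have hsub : Bad ⊆ B.biUnion (fun g => F.filter fun x => g • x ∉ F) := by
      intro x hx
      simp only [hBaddef, Finset.mem_filter, Finset.mem_biUnion] at hx ⊢
      obtain ⟨hxF, g, hgB, hgx⟩ := hx
      exact ⟨g, hgB, hxF, hgx⟩
    calc (Bad.card : ℝ) ≤ ((B.biUnion (fun g => F.filter fun x => g • x ∉ F)).card : ℝ) := by
          exact_mod_cast Finset.card_le_card hsub
      _ ≤ ∑ g ∈ B, ((F.filter fun x => g • x ∉ F).card : ℝ) := by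
          exact_mod_cast Finset.card_biUnion_le
      _ < ∑ _g ∈ B, δ * F.card := Finset.sum_lt_sum_of_nonempty hBne hg
      _ = B.card * (δ * F.card) := by rw [Finset.sum_const, nsmul_eq_mul]
      _ = ε * F.card := by
          rw [hδdef]
          field_simp
  -- the vertex set
  refine ⟨{x : Γ ⧸ H // x ∈ F}, inferInstance, ⟨⟨hFne.choose, hFne.choose_spec⟩⟩, ?_⟩
  set V := {x : Γ ⧸ H // x ∈ F} with hVdef
  -- permutations
  let eqv : ∀ i : Fin n, {x : V // γ i • (x : Γ ⧸ H) ∈ F} ≃ {x : V // (γ i)⁻¹ • (x : Γ ⧸ H) ∈ F} :=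
    fun i =>
    { toFun := fun x => ⟨⟨γ i • (x : Γ ⧸ H), x.2⟩, by
        simpa [inv_smul_smul] using (x : V).2⟩
      invFun := fun y => ⟨⟨(γ i)⁻¹ • (y : Γ ⧸ H), y.2⟩, by
        simpa [smul_inv_smul] using (y : V).2⟩
      left_inv := fun x => by
        apply Subtype.ext; apply Subtype.ext; simp
      right_inv := fun y => by
        apply Subtype.ext; apply Subtype.ext; simp }
  set σ : Fin n → Equiv.Perm V := fun i => extPerm _ _ (eqv i) with hσdef
  have hσpos : ∀ (i : Fin n) (x : V), γ i • (x : Γ ⧸ H) ∈ F →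
      ((σ i x : V) : Γ ⧸ H) = γ i • (x : Γ ⧸ H) := by
    intro i x h
    rw [hσdef]
    rw [extPerm_pos _ _ (eqv i) x h]
    rfl
  have hσneg : ∀ (i : Fin n) (x : V), (γ i)⁻¹ • (x : Γ ⧸ H) ∈ F →
      (((σ i)⁻¹ x : V) : Γ ⧸ H) = (γ i)⁻¹ • (x : Γ ⧸ H) := by
    intro i x h
    rw [hσdef]
    rw [extPerm_inv _ _ (eqv i) x h]
    rfl
  set ρ : FreeGroup (Fin n) →* Equiv.Perm V := FreeGroup.lift σ with hρdef
  refine ⟨ρ, ?_⟩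
  -- key trajectory lemma
  have key : ∀ L : List (Fin n × Bool), ∀ p : V,
      (∀ M : List (Fin n × Bool), M.length ≤ L.length → ((M.map sγ).prod) • (p : Γ ⧸ H) ∈ F) →
      (((L.map fun a => bif a.2 then σ a.1 else (σ a.1)⁻¹).prod p : V) : Γ ⧸ H)
        = ((L.map sγ).prod) • (p : Γ ⧸ H) := by
    intro L
    induction L with
    | nil => intro p _; simp
    | cons a L ih =>
      intro p hp
      have hL := ih p (fun M hM => hp M (le_trans hM (Nat.le_succ _)))
      have hmemL : ((L.map sγ).prod) • (p : Γ ⧸ H) ∈ F := hp L (Nat.le_succ _)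
      have hmemaL : ((((a :: L).map sγ).prod)) • (p : Γ ⧸ H) ∈ F := hp _ le_rfl
      simp only [List.map_cons, List.prod_cons] at hmemaL ⊢
      rw [Equiv.Perm.mul_apply, mul_smul]
      rw [mul_smul] at hmemaL
      set q := (L.map fun a => bif a.2 then σ a.1 else (σ a.1)⁻¹).prod p with hq
      obtain ⟨i, b⟩ := a
      cases b
      · simp only [cond_false] at hmemaL ⊢
        rw [hσneg i q (by rw [hL]; exact hmemaL), hL]; rfl
      · simp only [cond_true] at hmemaL ⊢
        rw [hσpos i q (by rw [hL]; exact hmemaL), hL]; rfl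
  -- good points are vertices
  have hvert : ∀ p : V, (∀ g ∈ B, g • (p : Γ ⧸ H) ∈ F) → IsZRVertex γ Z ρ r p := by
    intro p hp
    obtain ⟨g₀, hg₀⟩ := QuotientGroup.mk_surjective (p : Γ ⧸ H)
    refine ⟨conjSub g₀ H, hZ.invariant g₀ H hH, ?_⟩
    intro w w' hw hw'
    have hgood : ∀ M : List (Fin n × Bool), M.length ≤ r → ((M.map sγ).prod) • (p : Γ ⧸ H) ∈ F :=
      fun M hM => hp _ (hball M hM)
    have hρw : ∀ u : FreeGroup (Fin n), wordLength u ≤ r →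
        ((ρ u p : V) : Γ ⧸ H) = (FreeGroup.lift γ u) • (p : Γ ⧸ H) := by
      intro u hu
      conv_lhs => rw [← FreeGroup.mk_toWord (x := u)]
      conv_rhs => rw [← FreeGroup.mk_toWord (x := u)]
      rw [hρdef]
      rw [FreeGroup.lift_mk, FreeGroup.lift_mk]
      exact key (FreeGroup.toWord u) p (fun M hM => hgood M (le_trans hM hu))
    rw [Subtype.ext_iff, hρw w hw, hρw w' hw', ← hg₀]
    have hsm : ∀ g : Γ, g • (QuotientGroup.mk g₀ : Γ ⧸ H) = QuotientGroup.mk (g * g₀) :=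
      fun g => rfl
    rw [hsm, hsm, QuotientGroup.eq, QuotientGroup.eq]
    constructor
    · intro hmem
      refine Subgroup.mem_map.2 ⟨(FreeGroup.lift γ w * g₀)⁻¹ * (FreeGroup.lift γ w' * g₀), hmem, ?_⟩
      simp only [MulEquiv.toMonoidHom_eq_coe, MonoidHom.coe_coe, MulAut.conj_apply]
      group
    · intro hmem
      obtain ⟨h, hhH, hh⟩ := Subgroup.mem_map.1 hmem
      simp only [MulEquiv.toMonoidHom_eq_coe, MonoidHom.coe_coe, MulAut.conj_apply] at hh
      have h2 : (FreeGroup.lift γ w * g₀)⁻¹ * (FreeGroup.lift γ w' * g₀)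
          = g₀⁻¹ * (g₀ * h * g₀⁻¹) * g₀ := by rw [hh]; group
      have h3 : g₀⁻¹ * (g₀ * h * g₀⁻¹) * g₀ = h := by group
      rw [h2, h3]; exact hhH
  -- counting
  set Good : Finset V := Finset.univ.filter (fun p : V => ∀ g ∈ B, g • (p : Γ ⧸ H) ∈ F)
    with hGooddef
  have hGoodimage : Finset.image (Subtype.val) Good = F \ Bad := by
    ext y
    constructor
    · intro hy
      obtain ⟨p, hpG, rfl⟩ := Finset.mem_image.1 hy
      have hp : ∀ g ∈ B, g • (p : Γ ⧸ H) ∈ F := (Finset.mem_filter.1 hpG).2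
      refine Finset.mem_sdiff.2 ⟨p.2, ?_⟩
      intro hyBad
      obtain ⟨-, g, hgB, hgx⟩ := Finset.mem_filter.1 hyBad
      exact hgx (hp g hgB)
    · intro hy
      obtain ⟨hyF, hyB⟩ := Finset.mem_sdiff.1 hy
      refine Finset.mem_image.2 ⟨⟨y, hyF⟩, Finset.mem_filter.2 ⟨Finset.mem_univ _, ?_⟩, rfl⟩
      intro g hgB
      by_contra hc
      exact hyB (Finset.mem_filter.2 ⟨hyF, g, hgB, hc⟩)
  have hGoodcard : (Good.card : ℝ) = (F.card : ℝ) - Bad.card := by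
    have h1 : Good.card = (F \ Bad).card := by
      rw [← hGoodimage, Finset.card_image_of_injective _ Subtype.val_injective]
    have h2 : Bad ⊆ F := Finset.filter_subset _ _
    rw [h1, Finset.card_sdiff_of_subset h2]
    have := Finset.card_le_card h2
    push_cast [Nat.cast_sub this]
    ring
  have hVcard : (Fintype.card V : ℝ) = F.card := by
    exact_mod_cast Fintype.card_coe F
  have hsubset : (Good : Set V) ⊆ {p : V | IsZRVertex γ Z ρ r p} := by
    intro p hp
    simp only [hGooddef, Finset.coe_filter, Set.mem_setOf_eq, Finset.mem_univ, true_and] at hp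
    exact hvert p hp
  have hncard : (Good.card : ℝ) ≤ ({p : V | IsZRVertex γ Z ρ r p}.ncard : ℝ) := by
    have := Set.ncard_le_ncard hsubset (Set.toFinite _)
    rw [Set.ncard_coe_finset] at this
    exact_mod_cast this
  have : (1 - ε) * (Fintype.card V : ℝ) ≤ (Good.card : ℝ) := by
    rw [hVcard, hGoodcard]
    nlinarith
  linarith
end

section
/- Let Γ be a finitely generated group with finite symmetric generating set Q, Z a uniformly recurrent subgroup of Γ, H, L ∈ Z, and R ≥ 0. Let K_H : Γ/H × Γ/H → ℂ and K_L : Γ/L × Γ/L → ℂ be local kernels of width ≤ R that are compatible: whenever the rooted-labeled R-balls around x ∈ Γ/H and y ∈ Γ/L are isomorphic, K_H(x, w·x) = K_L(y, w·y) for every word w over Q of length ≤ R. Then the bounded operators that K_H and K_L induce on ℓ²(Γ/H;ℂ) and ℓ²(Γ/L;ℂ) respectively have equal operator norms. -/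
/-- The Schreier graph of a subgroup `H ≤ Γ` with respect to a generating set `Q`:
vertices are left cosets in `Γ/H`, and `x ~ y` iff some `s ∈ Q` moves one to the other. -/
def schreierGraph {Γ : Type*} [Group Γ] (Q : Finset Γ) (H : Subgroup Γ) :
    SimpleGraph (Γ ⧸ H) where
  Adj x y := x ≠ y ∧ ∃ s ∈ Q, s • x = y ∨ s • y = x
  symm := by
    constructor
    rintro x y ⟨hne, s, hs, h⟩
    exact ⟨hne.symm, s, hs, h.symm⟩
  loopless := by constructor; rintro x ⟨hne, _⟩; exact hne rfl

/-- The `R`-ball around `x` in the Schreier graph of `H`. -/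
def sBall {Γ : Type*} [Group Γ] (Q : Finset Γ) (H : Subgroup Γ) (R : ℕ) (x : Γ ⧸ H) :
    Set (Γ ⧸ H) :=
  {y | (schreierGraph Q H).Reachable x y ∧ (schreierGraph Q H).dist x y ≤ R}

/-- The rooted-labeled `R`-balls around `x ∈ Γ/H` and `y ∈ Γ/H'` are isomorphic:
there is a root-preserving bijection between them commuting with all generator labels. -/
def BallIso {Γ : Type*} [Group Γ] (Q : Finset Γ) (H H' : Subgroup Γ) (R : ℕ)
    (x : Γ ⧸ H) (y : Γ ⧸ H') : Prop :=
  ∃ φ : (Γ ⧸ H) → (Γ ⧸ H'),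
    Set.BijOn φ (sBall Q H R x) (sBall Q H' R y) ∧ φ x = y ∧
    ∀ s ∈ Q, ∀ u ∈ sBall Q H R x, ∀ v ∈ sBall Q H R x, (s • u = v ↔ s • φ u = φ v)

/-- The set of elements of `Γ` expressible as a product of at most `R` generators
from `Q` (words over `Q` of length at most `R`). -/
def WordLe {Γ : Type*} [Group Γ] (Q : Finset Γ) (R : ℕ) : Set Γ :=
  {g : Γ | ∃ l : List Γ, (∀ s ∈ l, s ∈ Q) ∧ l.length ≤ R ∧ l.prod = g}

/-- `K` is a local kernel of width at most `R` on the Schreier graph of `H`: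
it vanishes outside distance `R` and only depends on the rooted-labeled `R`-ball. -/
def IsLocalKernel {Γ : Type*} [Group Γ] (Q : Finset Γ) (H : Subgroup Γ) (R : ℕ)
    (K : (Γ ⧸ H) → (Γ ⧸ H) → ℂ) : Prop :=
  (∀ x y : Γ ⧸ H, y ∉ sBall Q H R x → K x y = 0) ∧
  (∀ x x' : Γ ⧸ H, BallIso Q H H R x x' →
    ∀ w ∈ WordLe Q R, K x (w • x) = K x' (w • x'))

section Words
open scoped Pointwise

variable {Γ : Type*} [Group Γ] {Q : Finset Γ} {H H' H'' : Subgroup Γ}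

theorem one_mem_wordLe (R : ℕ) : (1 : Γ) ∈ WordLe Q R :=
  ⟨[], by simp, by simp, by simp⟩

theorem wordLe_mono {R R' : ℕ} (h : R ≤ R') : WordLe Q R ⊆ WordLe Q R' := by
  rintro g ⟨l, h1, h2, h3⟩
  exact ⟨l, h1, h2.trans h, h3⟩

theorem wordLe_mul {a b : Γ} {m n : ℕ} (ha : a ∈ WordLe Q m) (hb : b ∈ WordLe Q n) :
    a * b ∈ WordLe Q (m + n) := by
  obtain ⟨l, h1, h2, h3⟩ := ha
  obtain ⟨l', h1', h2', h3'⟩ := hb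
  refine ⟨l ++ l', ?_, ?_, ?_⟩
  · intro s hs; rcases List.mem_append.1 hs with h | h
    · exact h1 s h
    · exact h1' s h
  · simpa using Nat.add_le_add h2 h2'
  · simp [List.prod_append, h3, h3']

theorem wordLe_inv (hsym : ∀ s ∈ Q, s⁻¹ ∈ Q) {a : Γ} {m : ℕ} (ha : a ∈ WordLe Q m) :
    a⁻¹ ∈ WordLe Q m := by
  obtain ⟨l, h1, h2, h3⟩ := ha
  refine ⟨(l.map (·⁻¹)).reverse, ?_, by simpa using h2, ?_⟩
  · intro s hs
    simp only [List.mem_reverse, List.mem_map] at hs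
    obtain ⟨t, ht, rfl⟩ := hs
    exact hsym t (h1 t ht)
  · rw [List.prod_reverse_noncomm]
    simp [h3]

theorem wordLe_finite (Q : Finset Γ) (R : ℕ) : (WordLe Q R).Finite := by
  induction R with
  | zero =>
    apply Set.Finite.subset (Set.finite_singleton (1 : Γ))
    rintro g ⟨l, _, h2, h3⟩
    interval_cases h : l.length
    · rw [List.length_eq_zero_iff] at h; simp [h] at h3; simp [← h3]
  | succ n ih =>
    apply Set.Finite.subset (ih.union (((Q : Set Γ).toFinite.mul ih)))
    rintro g ⟨l, h1, h2, h3⟩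
    match l with
    | [] => exact Or.inl ⟨[], by simp, by simp, h3⟩
    | s :: l' =>
      right
      have hg : g = s * l'.prod := by rw [← h3]; simp
      rw [hg]
      have hl' : l'.prod ∈ WordLe Q n := by
        refine ⟨l', fun t ht => h1 t (List.mem_cons_of_mem _ ht), ?_, rfl⟩
        simpa using Nat.succ_le_succ_iff.mp h2
      exact Set.mul_mem_mul (h1 s (by simp)) hl'

theorem exists_word_of_walk {x y : Γ ⧸ H} (hsym : ∀ s ∈ Q, s⁻¹ ∈ Q)
    (p : (schreierGraph Q H).Walk x y) : ∃ w ∈ WordLe Q p.length, w • x = y := by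
  induction p with
  | nil => exact ⟨1, one_mem_wordLe 0, one_smul _ _⟩
  | @cons x z y h p ih =>
    obtain ⟨w, hw, hwz⟩ := ih
    obtain ⟨-, s, hs, hcase⟩ := h
    have : ∃ t ∈ (Q : Set Γ), t • x = z := by
      rcases hcase with h' | h'
      · exact ⟨s, hs, h'⟩
      · exact ⟨s⁻¹, hsym s hs, by rw [← h', inv_smul_smul]⟩
    obtain ⟨t, ht, htz⟩ := this
    refine ⟨w * t, ?_, by rw [mul_smul, htz, hwz]⟩
    have := wordLe_mul hw (⟨[t], by simpa using ht, by simp, by simp⟩ : t ∈ WordLe Q 1)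
    exact this

theorem exists_walk_of_word {x : Γ ⧸ H} (l : List Γ) (hl : ∀ s ∈ l, s ∈ Q) :
    ∃ p : (schreierGraph Q H).Walk x (l.prod • x), p.length ≤ l.length := by
  induction l with
  | nil => exact ⟨(SimpleGraph.Walk.nil' x).copy rfl (by simp), by rw [SimpleGraph.Walk.length_copy]; simp⟩
  | cons s l ih =>
    obtain ⟨p, hp⟩ := ih (fun t ht => hl t (List.mem_cons_of_mem _ ht))
    have hcast : (s :: l).prod • x = s • (l.prod • x) := by rw [List.prod_cons, mul_smul]
    by_cases heq : s • (l.prod • x) = l.prod • x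
    · refine ⟨p.copy rfl (by rw [hcast, heq]), ?_⟩
      rw [SimpleGraph.Walk.length_copy]; simpa using hp.trans (Nat.le_succ _)
    · have hadj : (schreierGraph Q H).Adj (l.prod • x) ((s :: l).prod • x) := by
        refine ⟨fun hc => heq (by rw [← hcast, ← hc]), s, hl s (by simp), ?_⟩
        · exact Or.inl hcast.symm
      exact ⟨p.concat hadj, by rw [SimpleGraph.Walk.length_concat]; exact Nat.succ_le_succ hp⟩

theorem mem_sBall_iff (hsym : ∀ s ∈ Q, s⁻¹ ∈ Q) {R : ℕ} {x y : Γ ⧸ H} :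
    y ∈ sBall Q H R x ↔ ∃ w ∈ WordLe Q R, w • x = y := by
  constructor
  · rintro ⟨hr, hd⟩
    obtain ⟨p, hp⟩ := hr.exists_walk_length_eq_dist
    obtain ⟨w, hw, hwx⟩ := exists_word_of_walk hsym p
    exact ⟨w, wordLe_mono (hp ▸ hd) hw, hwx⟩
  · rintro ⟨w, ⟨l, h1, h2, h3⟩, rfl⟩
    obtain ⟨p, hp⟩ := exists_walk_of_word (x := x) l h1
    rw [← h3]
    exact ⟨p.reachable, (SimpleGraph.dist_le p).trans (hp.trans h2)⟩

theorem self_mem_sBall (R : ℕ) (x : Γ ⧸ H) : x ∈ sBall Q H R x :=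
  ⟨SimpleGraph.Reachable.refl x, by simp [SimpleGraph.dist_self]⟩

theorem sBall_mono {R R' : ℕ} (h : R ≤ R') (x : Γ ⧸ H) : sBall Q H R x ⊆ sBall Q H R' x :=
  fun _ hy => ⟨hy.1, hy.2.trans h⟩

theorem smul_mem_sBall (hsym : ∀ s ∈ Q, s⁻¹ ∈ Q) {a b : ℕ} {x u : Γ ⧸ H} {w : Γ}
    (hu : u ∈ sBall Q H a x) (hw : w ∈ WordLe Q b) : w • u ∈ sBall Q H (a + b) x := by
  rw [mem_sBall_iff hsym] at hu ⊢
  obtain ⟨w', hw', rfl⟩ := hu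
  exact ⟨w * w', by rw [Nat.add_comm]; exact wordLe_mul hw hw', by rw [mul_smul]⟩

theorem mem_sBall_symm (hsym : ∀ s ∈ Q, s⁻¹ ∈ Q) {R : ℕ} {x y : Γ ⧸ H}
    (h : y ∈ sBall Q H R x) : x ∈ sBall Q H R y := by
  rw [mem_sBall_iff hsym] at h ⊢
  obtain ⟨w, hw, rfl⟩ := h
  exact ⟨w⁻¹, wordLe_inv hsym hw, by rw [inv_smul_smul]⟩

theorem sBall_finite (hsym : ∀ s ∈ Q, s⁻¹ ∈ Q) (R : ℕ) (x : Γ ⧸ H) :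
    (sBall Q H R x).Finite := by
  apply Set.Finite.subset ((wordLe_finite Q R).image (fun w => w • x))
  intro y hy
  obtain ⟨w, hw, rfl⟩ := (mem_sBall_iff hsym).1 hy
  exact ⟨w, hw, rfl⟩

end Words

section BI

variable {Γ : Type*} [Group Γ] (Q : Finset Γ)

/-- Explicit-witness version of `BallIso`. -/
def IsBI (H H' : Subgroup Γ) (R : ℕ) (φ : (Γ ⧸ H) → (Γ ⧸ H')) (x : Γ ⧸ H) (y : Γ ⧸ H') : Prop :=
  Set.BijOn φ (sBall Q H R x) (sBall Q H' R y) ∧ φ x = y ∧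
    ∀ s ∈ Q, ∀ u ∈ sBall Q H R x, ∀ v ∈ sBall Q H R x, (s • u = v ↔ s • φ u = φ v)

variable {Q} {H H' H'' : Subgroup Γ}

theorem ballIso_iff {R : ℕ} {x : Γ ⧸ H} {y : Γ ⧸ H'} :
    BallIso Q H H' R x y ↔ ∃ φ, IsBI Q H H' R φ x y := Iff.rfl

theorem IsBI.map_list (hsym : ∀ s ∈ Q, s⁻¹ ∈ Q) {R a : ℕ} {φ : (Γ ⧸ H) → (Γ ⧸ H')}
    {x : Γ ⧸ H} {y : Γ ⧸ H'} (hφ : IsBI Q H H' R φ x y)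
    (l : List Γ) (hl : ∀ s ∈ l, s ∈ Q) {u : Γ ⧸ H} (hu : u ∈ sBall Q H a x)
    (hab : a + l.length ≤ R) : φ (l.prod • u) = l.prod • φ u := by
  induction l with
  | nil => simp
  | cons s l ih =>
    have hl' : ∀ t ∈ l, t ∈ Q := fun t ht => hl t (List.mem_cons_of_mem _ ht)
    have hlen : a + l.length ≤ R := by
      simp only [List.length_cons] at hab; omega
    have hu' : l.prod • u ∈ sBall Q H (a + l.length) x :=
      smul_mem_sBall hsym hu ⟨l, hl', le_refl _, rfl⟩
    have hu'R : l.prod • u ∈ sBall Q H R x := sBall_mono hlen _ hu'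
    have hsu : s • (l.prod • u) ∈ sBall Q H R x := by
      apply sBall_mono (show a + l.length + 1 ≤ R by simp only [List.length_cons] at hab; omega) _
      exact smul_mem_sBall hsym hu' ⟨[s], by simpa using hl s (by simp), by simp, by simp⟩
    have hlab := (hφ.2.2 s (hl s (by simp)) _ hu'R _ hsu).1 rfl
    rw [List.prod_cons, mul_smul, ← hlab, ih hl' hlen, mul_smul]

theorem IsBI.map_word (hsym : ∀ s ∈ Q, s⁻¹ ∈ Q) {R a b : ℕ} {φ : (Γ ⧸ H) → (Γ ⧸ H')}
    {x : Γ ⧸ H} {y : Γ ⧸ H'} (hφ : IsBI Q H H' R φ x y) {w : Γ} (hw : w ∈ WordLe Q b)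
    {u : Γ ⧸ H} (hu : u ∈ sBall Q H a x) (hab : a + b ≤ R) : φ (w • u) = w • φ u := by
  obtain ⟨l, h1, h2, rfl⟩ := hw
  exact hφ.map_list hsym l h1 hu (by omega)

theorem IsBI.mapsTo (hsym : ∀ s ∈ Q, s⁻¹ ∈ Q) {R a : ℕ} {φ : (Γ ⧸ H) → (Γ ⧸ H')}
    {x : Γ ⧸ H} {y : Γ ⧸ H'} (hφ : IsBI Q H H' R φ x y) (ha : a ≤ R)
    {u : Γ ⧸ H} (hu : u ∈ sBall Q H a x) : φ u ∈ sBall Q H' a y := by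
  obtain ⟨w, hw, rfl⟩ := (mem_sBall_iff hsym).1 hu
  rw [hφ.map_word hsym hw (self_mem_sBall 0 x) (by omega), hφ.2.1]
  exact (mem_sBall_iff hsym).2 ⟨w, hw, rfl⟩

/-- Restriction of a ball isomorphism to a ball around an interior point. -/
theorem IsBI.restrict (hsym : ∀ s ∈ Q, s⁻¹ ∈ Q) {R a b : ℕ} {φ : (Γ ⧸ H) → (Γ ⧸ H')}
    {x : Γ ⧸ H} {y : Γ ⧸ H'} (hφ : IsBI Q H H' R φ x y)
    {u : Γ ⧸ H} (hu : u ∈ sBall Q H a x) (hab : a + b ≤ R) :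
    IsBI Q H H' b φ u (φ u) := by
  have hsubH : sBall Q H b u ⊆ sBall Q H R x := by
    intro v hv
    obtain ⟨w, hw, rfl⟩ := (mem_sBall_iff hsym).1 hv
    exact sBall_mono hab _ (smul_mem_sBall hsym hu hw)
  have hmap : ∀ v ∈ sBall Q H b u, φ v ∈ sBall Q H' b (φ u) := by
    intro v hv
    obtain ⟨w, hw, rfl⟩ := (mem_sBall_iff hsym).1 hv
    rw [hφ.map_word hsym hw hu hab]
    exact (mem_sBall_iff hsym).2 ⟨w, hw, rfl⟩
  refine ⟨⟨hmap, fun v hv v' hv' hvv' => hφ.1.2.1 (hsubH hv) (hsubH hv') hvv', ?_⟩, rfl, ?_⟩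
  · intro v' hv'
    obtain ⟨w, hw, rfl⟩ := (mem_sBall_iff hsym).1 hv'
    refine ⟨w • u, (mem_sBall_iff hsym).2 ⟨w, hw, rfl⟩, (hφ.map_word hsym hw hu hab)⟩
  · intro s hs v hv v' hv'
    exact hφ.2.2 s hs v (hsubH hv) v' (hsubH hv')

theorem IsBI.symm (hsym : ∀ s ∈ Q, s⁻¹ ∈ Q) {R : ℕ} {φ : (Γ ⧸ H) → (Γ ⧸ H')}
    {x : Γ ⧸ H} {y : Γ ⧸ H'} (hφ : IsBI Q H H' R φ x y) :
    ∃ ψ : (Γ ⧸ H') → (Γ ⧸ H), IsBI Q H' H R ψ y x ∧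
      (∀ u ∈ sBall Q H R x, ψ (φ u) = u) ∧ (∀ v ∈ sBall Q H' R y, φ (ψ v) = v) := by
  classical
  have hinv : Set.InvOn (Function.invFunOn φ (sBall Q H R x)) φ
      (sBall Q H R x) (sBall Q H' R y) := hφ.1.invOn_invFunOn
  set ψ := Function.invFunOn φ (sBall Q H R x) with hψdef
  have hbij : Set.BijOn ψ (sBall Q H' R y) (sBall Q H R x) := Set.BijOn.symm hinv.symm hφ.1
  have hψy : ψ y = x := by
    have := hinv.1 (self_mem_sBall R x)
    rw [hφ.2.1] at this; exact this
  refine ⟨ψ, ⟨hbij, hψy, ?_⟩, fun u hu => hinv.1 hu, fun v hv => hinv.2 hv⟩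
  intro s hs u hu v hv
  have h1 := hφ.2.2 s hs (ψ u) (hbij.1 hu) (ψ v) (hbij.1 hv)
  rw [hinv.2 hu, hinv.2 hv] at h1
  exact h1.symm

theorem IsBI.comp (hsym : ∀ s ∈ Q, s⁻¹ ∈ Q) {R : ℕ}
    {φ : (Γ ⧸ H) → (Γ ⧸ H')} {φ' : (Γ ⧸ H') → (Γ ⧸ H'')}
    {x : Γ ⧸ H} {y : Γ ⧸ H'} {z : Γ ⧸ H''}
    (hφ : IsBI Q H H' R φ x y) (hφ' : IsBI Q H' H'' R φ' y z) :
    IsBI Q H H'' R (φ' ∘ φ) x z := by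
  refine ⟨hφ'.1.comp hφ.1, by simp [Function.comp, hφ.2.1, hφ'.2.1], ?_⟩
  intro s hs u hu v hv
  simp only [Function.comp_apply]
  rw [hφ.2.2 s hs u hu v hv, hφ'.2.2 s hs (φ u) (hφ.1.1 hu) (φ v) (hφ.1.1 hv)]

theorem isBI_of_equivariant (hsym : ∀ s ∈ Q, s⁻¹ ∈ Q) {F : (Γ ⧸ H) → (Γ ⧸ H')}
    (hbij : Function.Bijective F) (hequi : ∀ (g : Γ) (u : Γ ⧸ H), F (g • u) = g • F u)
    {x : Γ ⧸ H} {y : Γ ⧸ H'} (hxy : F x = y) (R : ℕ) : IsBI Q H H' R F x y := by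
  have hmem : ∀ a : ℕ, ∀ u, u ∈ sBall Q H a x → F u ∈ sBall Q H' a y := by
    intro a u hu
    obtain ⟨w, hw, rfl⟩ := (mem_sBall_iff hsym).1 hu
    rw [hequi, hxy]
    exact (mem_sBall_iff hsym).2 ⟨w, hw, rfl⟩
  refine ⟨⟨hmem R, fun u _ v _ huv => hbij.1 huv, ?_⟩, hxy, ?_⟩
  · intro v hv
    obtain ⟨w, hw, rfl⟩ := (mem_sBall_iff hsym).1 hv
    exact ⟨w • x, (mem_sBall_iff hsym).2 ⟨w, hw, rfl⟩, by rw [hequi, hxy]⟩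
  · intro s hs u _ v _
    constructor
    · rintro rfl; rw [hequi]
    · intro h; apply hbij.1; rw [hequi, h]

end BI

section URS

variable {Γ : Type*} [Group Γ] {Q : Finset Γ} {H L : Subgroup Γ}

theorem exists_wordLe_of_gen (hgen : Subgroup.closure (Q : Set Γ) = ⊤)
    (hsym : ∀ s ∈ Q, s⁻¹ ∈ Q) (γ : Γ) : ∃ n, γ ∈ WordLe Q n := by
  have hγ : γ ∈ Subgroup.closure (Q : Set Γ) := by rw [hgen]; trivial
  induction hγ using Subgroup.closure_induction with
  | mem x hx => exact ⟨1, [x], by simpa using hx, by simp, by simp⟩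
  | one => exact ⟨0, one_mem_wordLe 0⟩
  | mul x y hx hy ihx ihy =>
    obtain ⟨m, hm⟩ := ihx; obtain ⟨n, hn⟩ := ihy
    exact ⟨m + n, wordLe_mul hm hn⟩
  | inv x hx ihx =>
    obtain ⟨m, hm⟩ := ihx
    exact ⟨m, wordLe_inv hsym hm⟩

theorem exists_conj_agree (hZ : IsURS Z) (hL : L ∈ Z) {A : Subgroup Γ} (hA : A ∈ Z)
    {S : Set Γ} (hS : S.Finite) : ∃ g : Γ, ∀ γ ∈ S, (γ ∈ conjSub g L ↔ γ ∈ A) := by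
  classical
  have hclo := hZ.minimal L hL A hA
  have hclo' : (fun (B : Subgroup Γ) (g : Γ) => @decide (g ∈ B) (Classical.dec _)) A ∈
      closure ((fun (B : Subgroup Γ) (g : Γ) => @decide (g ∈ B) (Classical.dec _)) ''
        {B : Subgroup Γ | ∃ g : Γ, conjSub g L = B}) :=
    closure_induced.mp hclo
  set f := fun (B : Subgroup Γ) (g : Γ) => @decide (g ∈ B) (Classical.dec _) with hf
  have hopen : IsOpen (Set.pi S (fun γ => {f A γ})) :=
    isOpen_set_pi hS (fun a _ => isOpen_discrete _)
  have hmem : f A ∈ Set.pi S (fun γ => {f A γ}) := fun γ _ => rfl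
  obtain ⟨p, hp1, hp2⟩ := mem_closure_iff.mp hclo' _ hopen hmem
  obtain ⟨B, ⟨g, rfl⟩, rfl⟩ := hp2
  refine ⟨g, fun γ hγ => ?_⟩
  have := hp1 γ hγ
  simp only [Set.mem_singleton_iff, hf] at this
  exact decide_eq_decide.mp this

theorem mk_smul_one (A : Subgroup Γ) (w : Γ) :
    w • ((1 : Γ) : Γ ⧸ A) = (w : Γ ⧸ A) := by
  rw [MulAction.Quotient.smul_mk]
  simp

theorem isBI_of_agree (hsym : ∀ s ∈ Q, s⁻¹ ∈ Q) {A B : Subgroup Γ} (R' : ℕ)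
    (hag : ∀ w ∈ WordLe Q (2 * R' + 1), (w ∈ A ↔ w ∈ B)) :
    ∃ φ, IsBI Q A B R' φ ((1 : Γ) : Γ ⧸ A) ((1 : Γ) : Γ ⧸ B) := by
  classical
  set P : (Γ ⧸ A) → Prop := fun x => ∃ w ∈ WordLe Q R', w • ((1 : Γ) : Γ ⧸ A) = x with hP
  set φ : (Γ ⧸ A) → (Γ ⧸ B) := fun x =>
    if h : P x then ((h.choose : Γ) : Γ ⧸ B) else ((1 : Γ) : Γ ⧸ B) with hφ
  -- words of length ≤ 2R'+1 agree in A and B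
  have hAB : ∀ w w' : Γ, w ∈ WordLe Q (R' + 1) → w' ∈ WordLe Q R' →
      (((w : Γ ⧸ A) = (w' : Γ ⧸ A)) ↔ ((w : Γ ⧸ B) = (w' : Γ ⧸ B))) := by
    intro w w' hw hw'
    rw [QuotientGroup.eq, QuotientGroup.eq]
    exact hag _ (by
      have : w⁻¹ * w' ∈ WordLe Q ((R' + 1) + R') := wordLe_mul (wordLe_inv hsym hw) hw'
      exact wordLe_mono (by omega) this)
  have hφw : ∀ w ∈ WordLe Q R', φ ((w : Γ) : Γ ⧸ A) = ((w : Γ) : Γ ⧸ B) := by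
    intro w hw
    have hPw : P ((w : Γ) : Γ ⧸ A) := ⟨w, hw, mk_smul_one A w⟩
    simp only [hφ]; rw [dif_pos hPw]
    obtain ⟨hc1, hc2⟩ := hPw.choose_spec
    rw [mk_smul_one A] at hc2
    exact (hAB _ _ (wordLe_mono (by omega) hc1) hw).mp hc2
  have hmem : ∀ u, u ∈ sBall Q A R' ((1 : Γ) : Γ ⧸ A) ↔
      ∃ w ∈ WordLe Q R', ((w : Γ) : Γ ⧸ A) = u := by
    intro u
    rw [mem_sBall_iff hsym]
    constructor
    · rintro ⟨w, hw, rfl⟩; exact ⟨w, hw, (mk_smul_one A w).symm⟩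
    · rintro ⟨w, hw, rfl⟩; exact ⟨w, hw, mk_smul_one A w⟩
  have hmemB : ∀ u, u ∈ sBall Q B R' ((1 : Γ) : Γ ⧸ B) ↔
      ∃ w ∈ WordLe Q R', ((w : Γ) : Γ ⧸ B) = u := by
    intro u
    rw [mem_sBall_iff hsym]
    constructor
    · rintro ⟨w, hw, rfl⟩; exact ⟨w, hw, (mk_smul_one B w).symm⟩
    · rintro ⟨w, hw, rfl⟩; exact ⟨w, hw, mk_smul_one B w⟩
  refine ⟨φ, ⟨⟨?_, ?_, ?_⟩, ?_, ?_⟩⟩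
  · -- MapsTo
    intro u hu
    obtain ⟨w, hw, rfl⟩ := (hmem u).mp hu
    rw [hφw w hw]
    exact (hmemB _).mpr ⟨w, hw, rfl⟩
  · -- InjOn
    intro u hu v hv huv
    obtain ⟨w, hw, rfl⟩ := (hmem u).mp hu
    obtain ⟨w', hw', rfl⟩ := (hmem v).mp hv
    rw [hφw w hw, hφw w' hw'] at huv
    exact (hAB w w' (wordLe_mono (by omega) hw) hw').mpr huv
  · -- SurjOn
    intro v hv
    obtain ⟨w, hw, rfl⟩ := (hmemB v).mp hv
    exact ⟨((w : Γ) : Γ ⧸ A), (hmem _).mpr ⟨w, hw, rfl⟩, hφw w hw⟩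
  · -- root
    have h1 : ((1 : Γ) : Γ ⧸ A) = (((1 : Γ) : Γ) : Γ ⧸ A) := rfl
    rw [h1, hφw 1 (one_mem_wordLe R')]
  · -- labels
    intro s hs u hu v hv
    obtain ⟨w, hw, rfl⟩ := (hmem u).mp hu
    obtain ⟨w', hw', rfl⟩ := (hmem v).mp hv
    rw [hφw w hw, hφw w' hw']
    have hsmulA : s • ((w : Γ) : Γ ⧸ A) = ((s * w : Γ) : Γ ⧸ A) :=
      MulAction.Quotient.smul_mk A s w
    have hsmulB : s • ((w : Γ) : Γ ⧸ B) = ((s * w : Γ) : Γ ⧸ B) :=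
      MulAction.Quotient.smul_mk B s w
    rw [hsmulA, hsmulB]
    have hsw : s * w ∈ WordLe Q (R' + 1) := by
      have := wordLe_mul (⟨[s], by simpa using hs, by simp, by simp⟩ : s ∈ WordLe Q 1) hw
      exact wordLe_mono (by omega) this
    exact hAB _ _ hsw hw'

end URS

section Shift

variable {Γ : Type*} [Group Γ] {Q : Finset Γ}

theorem mem_conjSub {γ h : Γ} {H : Subgroup Γ} :
    h ∈ conjSub γ H ↔ ∃ a ∈ H, γ * a * γ⁻¹ = h := by
  simp [conjSub, Subgroup.mem_map, MulAut.conj]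

theorem mem_conjSub' {γ h : Γ} {H : Subgroup Γ} :
    h ∈ conjSub γ H ↔ γ⁻¹ * h * γ ∈ H := by
  rw [mem_conjSub]
  constructor
  · rintro ⟨a, ha, rfl⟩
    have : γ⁻¹ * (γ * a * γ⁻¹) * γ = a := by group
    rw [this]; exact ha
  · intro hmem
    exact ⟨γ⁻¹ * h * γ, hmem, by group⟩

/-- The shift map `Γ/H → Γ/(γHγ⁻¹)`, `δH ↦ δγ⁻¹ (γHγ⁻¹)`. -/
noncomputable def shiftMap (γ : Γ) (H : Subgroup Γ) : (Γ ⧸ H) → (Γ ⧸ conjSub γ H) :=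
  fun x => Quotient.liftOn' x (fun δ => ((δ * γ⁻¹ : Γ) : Γ ⧸ conjSub γ H))
    (by
      intro δ δ' hδ
      rw [QuotientGroup.leftRel_apply] at hδ
      apply QuotientGroup.eq.mpr
      rw [mem_conjSub']
      have h : γ⁻¹ * ((δ * γ⁻¹)⁻¹ * (δ' * γ⁻¹)) * γ = δ⁻¹ * δ' := by group
      rw [h]; exact hδ)

theorem shiftMap_mk (γ : Γ) (H : Subgroup Γ) (δ : Γ) :
    shiftMap γ H ((δ : Γ ⧸ H)) = ((δ * γ⁻¹ : Γ) : Γ ⧸ conjSub γ H) := rfl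

theorem shiftMap_equivariant (γ : Γ) (H : Subgroup Γ) (g : Γ) (x : Γ ⧸ H) :
    shiftMap γ H (g • x) = g • shiftMap γ H x := by
  induction x using QuotientGroup.induction_on with
  | H δ =>
    rw [MulAction.Quotient.smul_mk, shiftMap_mk, shiftMap_mk, MulAction.Quotient.smul_mk]
    simp [smul_eq_mul, mul_assoc]

theorem shiftMap_bijective (γ : Γ) (H : Subgroup Γ) : Function.Bijective (shiftMap γ H) := by
  constructor
  · intro x y hxy
    induction x using QuotientGroup.induction_on with
    | H δ =>
      induction y using QuotientGroup.induction_on with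
      | H δ' =>
        rw [shiftMap_mk, shiftMap_mk, QuotientGroup.eq, mem_conjSub'] at hxy
        apply QuotientGroup.eq.mpr
        have h : γ⁻¹ * ((δ * γ⁻¹)⁻¹ * (δ' * γ⁻¹)) * γ = δ⁻¹ * δ' := by group
        rw [h] at hxy
        exact hxy
  · intro y
    induction y using QuotientGroup.induction_on with
    | H δ =>
      refine ⟨((δ * γ : Γ) : Γ ⧸ H), ?_⟩
      rw [shiftMap_mk, mul_inv_cancel_right]

theorem shiftMap_root (γ : Γ) (H : Subgroup Γ) :
    shiftMap γ H ((γ : Γ ⧸ H)) = ((1 : Γ) : Γ ⧸ conjSub γ H) := by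
  rw [shiftMap_mk, mul_inv_cancel]

theorem exists_ballIso_of_URS (hgen : Subgroup.closure (Q : Set Γ) = ⊤)
    (hsym : ∀ s ∈ Q, s⁻¹ ∈ Q) {Z : Set (Subgroup Γ)} (hZ : IsURS Z)
    {H L : Subgroup Γ} (hH : H ∈ Z) (hL : L ∈ Z) (x : Γ ⧸ H) (R' : ℕ) :
    ∃ y : Γ ⧸ L, ∃ φ, IsBI Q H L R' φ x y := by
  classical
  obtain ⟨γ, rfl⟩ := QuotientGroup.mk_surjective x
  set A := conjSub γ H with hA
  have hAZ : A ∈ Z := hZ.invariant γ H hH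
  obtain ⟨g, hg⟩ := exists_conj_agree hZ hL hAZ (wordLe_finite Q (2 * R' + 1))
  have hF : IsBI Q H A R' (shiftMap γ H) ((γ : Γ ⧸ H)) ((1 : Γ) : Γ ⧸ A) :=
    isBI_of_equivariant hsym (shiftMap_bijective γ H) (shiftMap_equivariant γ H)
      (shiftMap_root γ H) R'
  obtain ⟨φ₂, hφ₂⟩ := isBI_of_agree hsym R'
    (fun w hw => ((hg w hw).symm : (w ∈ A ↔ w ∈ conjSub g L)))
  have h1 := isBI_of_equivariant (Q := Q) hsym (shiftMap_bijective g L)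
    (shiftMap_equivariant g L) (shiftMap_root g L) R'
  obtain ⟨ψ, hψ, -, -⟩ := h1.symm hsym
  exact ⟨(g : Γ ⧸ L), _, (hF.comp hsym hφ₂).comp hsym hψ⟩

end Shift

section Analytic

open scoped ENNReal

variable {Γ : Type*} [Group Γ] {Q : Finset Γ}

theorem memℓp_two_of_finite_support {ι : Type*} (g : ι → ℂ)
    (h : (Function.support g).Finite) : Memℓp g 2 := by
  apply memℓp_gen
  apply summable_of_ne_finset_zero (s := h.toFinset)
  intro i hi
  have hgi : g i = 0 := by
    by_contra hne
    exact hi (h.mem_toFinset.mpr hne)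
  rw [hgi]
  rw [norm_zero, Real.zero_rpow (by simp)]

theorem exists_radius (hgen : Subgroup.closure (Q : Set Γ) = ⊤)
    (hsym : ∀ s ∈ Q, s⁻¹ ∈ Q) {H : Subgroup Γ} (u x : Γ ⧸ H) :
    ∃ n, u ∈ sBall Q H n x := by
  obtain ⟨a, rfl⟩ := QuotientGroup.mk_surjective u
  obtain ⟨b, rfl⟩ := QuotientGroup.mk_surjective x
  obtain ⟨n, hn⟩ := exists_wordLe_of_gen hgen hsym (a * b⁻¹)
  refine ⟨n, (mem_sBall_iff hsym).mpr ⟨a * b⁻¹, hn, ?_⟩⟩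
  rw [MulAction.Quotient.smul_mk, smul_eq_mul, inv_mul_cancel_right]

theorem opNorm_le_of_transport
    (hgen : Subgroup.closure (Q : Set Γ) = ⊤)
    (hsym : ∀ s ∈ Q, s⁻¹ ∈ Q)
    {H L : Subgroup Γ} {R : ℕ}
    {K_H : (Γ ⧸ H) → (Γ ⧸ H) → ℂ} {K_L : (Γ ⧸ L) → (Γ ⧸ L) → ℂ}
    (hKH : IsLocalKernel Q H R K_H) (hKL : IsLocalKernel Q L R K_L)
    (hcompat : ∀ (x : Γ ⧸ H) (y : Γ ⧸ L), BallIso Q H L R x y →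
      ∀ w ∈ WordLe Q R, K_H x (w • x) = K_L y (w • y))
    (htrans : ∀ (x : Γ ⧸ H) (R' : ℕ), ∃ y : Γ ⧸ L, ∃ φ, IsBI Q H L R' φ x y)
    (T_H : lp (fun _ : Γ ⧸ H => ℂ) 2 →L[ℂ] lp (fun _ : Γ ⧸ H => ℂ) 2)
    (T_L : lp (fun _ : Γ ⧸ L => ℂ) 2 →L[ℂ] lp (fun _ : Γ ⧸ L => ℂ) 2)
    (hTH : ∀ (f : lp (fun _ : Γ ⧸ H => ℂ) 2) (x : Γ ⧸ H),
      (T_H f : (Γ ⧸ H) → ℂ) x = ∑' y : Γ ⧸ H, K_H x y * (f : (Γ ⧸ H) → ℂ) y)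
    (hTL : ∀ (f : lp (fun _ : Γ ⧸ L => ℂ) 2) (x : Γ ⧸ L),
      (T_L f : (Γ ⧸ L) → ℂ) x = ∑' y : Γ ⧸ L, K_L x y * (f : (Γ ⧸ L) → ℂ) y) :
    ‖T_H‖ ≤ ‖T_L‖ := by
  classical
  have htoReal : (2 : ℝ≥0∞).toReal = 2 := by simp
  have hp2 : (0:ℝ) < (2 : ℝ≥0∞).toReal := by rw [htoReal]; norm_num
  have hrpow0 : ∀ c : ℂ, c = 0 → ‖c‖ ^ (2 : ℝ≥0∞).toReal = 0 := by
    intro c hc; rw [hc, norm_zero, Real.zero_rpow hp2.ne']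
  have mono : ∀ a b : ℝ, 0 ≤ a → 0 ≤ b →
      a ^ (2 : ℝ≥0∞).toReal ≤ b ^ (2 : ℝ≥0∞).toReal → a ≤ b := by
    intro a b ha hb h
    rw [htoReal, show ((2:ℝ)) = ((2:ℕ):ℝ) by norm_num, Real.rpow_natCast, Real.rpow_natCast] at h
    exact (pow_le_pow_iff_left₀ ha hb (by norm_num)).mp h
  -- Main step: the bound for finitely supported F.
  have key : ∀ F : lp (fun _ : Γ ⧸ H => ℂ) 2,
      (Function.support (F : (Γ ⧸ H) → ℂ)).Finite → ‖T_H F‖ ≤ ‖T_L‖ * ‖F‖ := by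
    intro F hFfin
    by_cases hF0 : F = 0
    · simp only [hF0, map_zero, norm_zero, mul_zero, le_refl]
    have hFne : (Function.support (F : (Γ ⧸ H) → ℂ)).Nonempty := by
      rw [Function.support_nonempty_iff]
      intro hc
      exact hF0 (lp.ext hc)
    obtain ⟨x₀, hx₀⟩ := hFne
    choose nrad hnrad using fun u => exists_radius hgen hsym (H := H) u x₀
    set R₀ : ℕ := hFfin.toFinset.sup nrad with hR₀
    have hsupp : ∀ u : Γ ⧸ H, (F : (Γ ⧸ H) → ℂ) u ≠ 0 → u ∈ sBall Q H R₀ x₀ := by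
      intro u hu
      exact sBall_mono (Finset.le_sup (hFfin.mem_toFinset.mpr hu)) x₀ (hnrad u)
    obtain ⟨y₀, φ, hφ⟩ := htrans x₀ (R₀ + R + R)
    obtain ⟨ψ, hψ, hψφ, hφψ⟩ := hφ.symm hsym
    set g : (Γ ⧸ L) → ℂ :=
      fun v => if v ∈ sBall Q L R₀ y₀ then (F : (Γ ⧸ H) → ℂ) (ψ v) else 0 with hgdef
    have hgval : ∀ v ∈ sBall Q L R₀ y₀, g v = (F : (Γ ⧸ H) → ℂ) (ψ v) :=
      fun v hv => if_pos hv
    have hgval0 : ∀ (v : Γ ⧸ L), v ∉ sBall Q L R₀ y₀ → g v = 0 := fun v hv => if_neg hv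
    have hgfin : (Function.support g).Finite := by
      apply (sBall_finite hsym R₀ y₀).subset
      intro v hv
      by_contra hvB
      exact hv (hgval0 v hvB)
    set G : lp (fun _ : Γ ⧸ L => ℂ) 2 := ⟨g, memℓp_two_of_finite_support g hgfin⟩ with hGdef
    have hGcoe : (G : (Γ ⧸ L) → ℂ) = g := rfl
    have hball_φ : ∀ a : ℕ, a ≤ R₀ + R + R → ∀ u ∈ sBall Q H a x₀, φ u ∈ sBall Q L a y₀ :=
      fun a ha u hu => hφ.mapsTo hsym ha hu
    have hball_ψ : ∀ a : ℕ, a ≤ R₀ + R + R → ∀ v ∈ sBall Q L a y₀, ψ v ∈ sBall Q H a x₀ :=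
      fun a ha v hv => hψ.mapsTo hsym ha hv
    have hψφ' : ∀ a : ℕ, a ≤ R₀ + R + R → ∀ u ∈ sBall Q H a x₀, ψ (φ u) = u :=
      fun a ha u hu => hψφ u (sBall_mono ha x₀ hu)
    have hφψ' : ∀ a : ℕ, a ≤ R₀ + R + R → ∀ v ∈ sBall Q L a y₀, φ (ψ v) = v :=
      fun a ha v hv => hφψ v (sBall_mono ha y₀ hv)
    set BH : Finset (Γ ⧸ H) := (sBall_finite hsym (H := H) R₀ x₀).toFinset with hBH
    set BL : Finset (Γ ⧸ L) := (sBall_finite hsym (H := L) R₀ y₀).toFinset with hBL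
    have hBHmem : ∀ u : Γ ⧸ H, u ∈ BH ↔ u ∈ sBall Q H R₀ x₀ := by
      intro u; rw [hBH, Set.Finite.mem_toFinset]
    have hBLmem : ∀ v : Γ ⧸ L, v ∈ BL ↔ v ∈ sBall Q L R₀ y₀ := by
      intro v; rw [hBL, Set.Finite.mem_toFinset]
    -- ‖G‖ ≤ ‖F‖
    have hnormG : ‖G‖ ≤ ‖F‖ := by
      refine mono _ _ (norm_nonneg G) (norm_nonneg F) ?_
      rw [lp.norm_rpow_eq_tsum hp2 G, lp.norm_rpow_eq_tsum hp2 F]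
      have h3 : ∑' v, ‖(G : (Γ ⧸ L) → ℂ) v‖ ^ (2:ℝ≥0∞).toReal
          = ∑ v ∈ BL, ‖g v‖ ^ (2:ℝ≥0∞).toReal := by
        rw [hGcoe]
        exact tsum_eq_sum (fun v hv => hrpow0 _ (hgval0 v (fun h => hv ((hBLmem v).mpr h))))
      have h4 : ∑ v ∈ BL, ‖g v‖ ^ (2:ℝ≥0∞).toReal
          = ∑ u ∈ BH, ‖(F : (Γ ⧸ H) → ℂ) u‖ ^ (2:ℝ≥0∞).toReal := by
        refine Finset.sum_nbij' (i := ψ) (j := φ) ?_ ?_ ?_ ?_ ?_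
        · intro v hv
          exact (hBHmem _).mpr (hball_ψ R₀ (by omega) v ((hBLmem v).mp hv))
        · intro u hu
          exact (hBLmem _).mpr (hball_φ R₀ (by omega) u ((hBHmem u).mp hu))
        · intro v hv
          exact hφψ' R₀ (by omega) v ((hBLmem v).mp hv)
        · intro u hu
          exact hψφ' R₀ (by omega) u ((hBHmem u).mp hu)
        · intro v hv
          rw [hgval v ((hBLmem v).mp hv)]
      rw [h3, h4]
      exact Summable.sum_le_tsum BH (fun u _ => Real.rpow_nonneg (norm_nonneg _) _)
        ((lp.hasSum_norm hp2 F).summable)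
    -- pointwise transport
    have hTpoint : ∀ u ∈ sBall Q H (R₀ + R) x₀,
        (T_L G : (Γ ⧸ L) → ℂ) (φ u) = (T_H F : (Γ ⧸ H) → ℂ) u := by
      intro u hu
      rw [hTL, hTH]
      have hzH : ∀ v, v ∉ BH → K_H u v * (F : (Γ ⧸ H) → ℂ) v = 0 := by
        intro v hv
        have : (F : (Γ ⧸ H) → ℂ) v = 0 := by
          by_contra hne
          exact hv ((hBHmem v).mpr (hsupp v hne))
        rw [this, mul_zero]
      have hzL : ∀ w, w ∉ BL → K_L (φ u) w * (G : (Γ ⧸ L) → ℂ) w = 0 := by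
        intro w hw
        rw [hGcoe, hgval0 w (fun h => hw ((hBLmem w).mpr h)), mul_zero]
      rw [tsum_eq_sum hzL, tsum_eq_sum hzH]
      refine Finset.sum_nbij' (i := ψ) (j := φ) ?_ ?_ ?_ ?_ ?_
      · intro v hv
        exact (hBHmem _).mpr (hball_ψ R₀ (by omega) v ((hBLmem v).mp hv))
      · intro v hv
        exact (hBLmem _).mpr (hball_φ R₀ (by omega) v ((hBHmem v).mp hv))
      · intro v hv
        exact hφψ' R₀ (by omega) v ((hBLmem v).mp hv)
      · intro v hv
        exact hψφ' R₀ (by omega) v ((hBHmem v).mp hv)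
      · -- term equality: for w ∈ BL, K_L (φ u) w * G w = K_H u (ψ w) * F (ψ w)
        intro w hw
        have hwB : w ∈ sBall Q L R₀ y₀ := (hBLmem w).mp hw
        have hv : ψ w ∈ sBall Q H R₀ x₀ := hball_ψ R₀ (by omega) w hwB
        have hφψw : φ (ψ w) = w := hφψ' R₀ (by omega) w hwB
        have hgw : (G : (Γ ⧸ L) → ℂ) w = (F : (Γ ⧸ H) → ℂ) (ψ w) := hgval w hwB
        rw [hgw]
        by_cases hvu : ψ w ∈ sBall Q H R u
        · obtain ⟨wd, hwd, heq⟩ := (mem_sBall_iff hsym).mp hvu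
          have hrest : IsBI Q H L R φ u (φ u) := hφ.restrict hsym hu (by omega)
          have hcomp := hcompat u (φ u) ⟨φ, hrest⟩ wd hwd
          have hφwu : φ (wd • u) = wd • φ u :=
            hφ.map_word hsym hwd hu (by omega)
          have hKeq : K_H u (ψ w) = K_L (φ u) w := by
            rw [← heq, hcomp]
            congr 1
            rw [← hφwu, heq]
            exact hφψw
          rw [hKeq]
        · have h1 : K_H u (ψ w) = 0 := hKH.1 u (ψ w) hvu
          have h2 : w ∉ sBall Q L R (φ u) := by
            intro hc
            apply hvu
            have hφu' : φ u ∈ sBall Q L (R₀ + R) y₀ := hball_φ (R₀ + R) (by omega) u hu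
            have hrestψ : IsBI Q L H R ψ (φ u) (ψ (φ u)) :=
              hψ.restrict hsym hφu' (by omega)
            have h3 := hrestψ.mapsTo hsym (le_refl R) hc
            rw [hψφ' (R₀ + R) (by omega) u hu] at h3
            exact h3
          rw [h1, hKL.1 _ _ h2, zero_mul]
    -- T_H F is supported in the (R₀+R)-ball
    have hTH0 : ∀ u, u ∉ sBall Q H (R₀ + R) x₀ → (T_H F : (Γ ⧸ H) → ℂ) u = 0 := by
      intro u hu
      rw [hTH]
      have hz : ∀ v, K_H u v * (F : (Γ ⧸ H) → ℂ) v = 0 := by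
        intro v
        by_cases hv : (F : (Γ ⧸ H) → ℂ) v = 0
        · rw [hv, mul_zero]
        · have hvball := hsupp v hv
          have hnot : v ∉ sBall Q H R u := by
            intro hc
            apply hu
            obtain ⟨w, hw, rfl⟩ := (mem_sBall_iff hsym).mp (mem_sBall_symm hsym hc)
            exact smul_mem_sBall hsym hvball hw
          rw [hKH.1 u v hnot, zero_mul]
      rw [tsum_congr hz, tsum_zero]
    -- ‖T_H F‖ ≤ ‖T_L G‖
    have hnormT : ‖T_H F‖ ≤ ‖T_L G‖ := by
      refine mono _ _ (norm_nonneg _) (norm_nonneg _) ?_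
      rw [lp.norm_rpow_eq_tsum hp2 (T_H F), lp.norm_rpow_eq_tsum hp2 (T_L G)]
      set B2 : Finset (Γ ⧸ H) := (sBall_finite hsym (H := H) (R₀ + R) x₀).toFinset with hB2
      have hB2mem : ∀ u : Γ ⧸ H, u ∈ B2 ↔ u ∈ sBall Q H (R₀ + R) x₀ := by
        intro u; rw [hB2, Set.Finite.mem_toFinset]
      have h3 : ∑' u, ‖(T_H F : (Γ ⧸ H) → ℂ) u‖ ^ (2:ℝ≥0∞).toReal
          = ∑ u ∈ B2, ‖(T_H F : (Γ ⧸ H) → ℂ) u‖ ^ (2:ℝ≥0∞).toReal :=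
        tsum_eq_sum (fun u hu => hrpow0 _ (hTH0 u (fun h => hu ((hB2mem u).mpr h))))
      have h4 : ∑ u ∈ B2, ‖(T_H F : (Γ ⧸ H) → ℂ) u‖ ^ (2:ℝ≥0∞).toReal
          = ∑ v ∈ B2.image φ, ‖(T_L G : (Γ ⧸ L) → ℂ) v‖ ^ (2:ℝ≥0∞).toReal := by
        rw [Finset.sum_image (fun a ha b hb hab => hφ.1.2.1
          (sBall_mono (by omega) x₀ ((hB2mem a).mp ha))
          (sBall_mono (by omega) x₀ ((hB2mem b).mp hb)) hab)]
        refine Finset.sum_congr rfl (fun u hu => ?_)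
        rw [hTpoint u ((hB2mem u).mp hu)]
      rw [h3, h4]
      exact Summable.sum_le_tsum _ (fun v _ => Real.rpow_nonneg (norm_nonneg _) _)
        ((lp.hasSum_norm hp2 (T_L G)).summable)
    calc ‖T_H F‖ ≤ ‖T_L G‖ := hnormT
      _ ≤ ‖T_L‖ * ‖G‖ := T_L.le_opNorm G
      _ ≤ ‖T_L‖ * ‖F‖ := by
          exact mul_le_mul_of_nonneg_left hnormG (norm_nonneg T_L)
  -- reduce to finitely supported elements by density
  refine T_H.opNorm_le_bound (norm_nonneg T_L) ?_
  intro f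
  have hsum : HasSum (fun i : Γ ⧸ H => lp.single 2 i ((f : (Γ ⧸ H) → ℂ) i)) f :=
    lp.hasSum_single (by norm_num) f
  have h1 : Filter.Tendsto
      (fun s : Finset (Γ ⧸ H) => ‖T_H (∑ i ∈ s, lp.single 2 i ((f : (Γ ⧸ H) → ℂ) i))‖)
      Filter.atTop (nhds ‖T_H f‖) :=
    (((T_H.continuous.tendsto f).comp hsum).norm)
  have h2 : Filter.Tendsto
      (fun s : Finset (Γ ⧸ H) => ‖T_L‖ * ‖∑ i ∈ s, lp.single 2 i ((f : (Γ ⧸ H) → ℂ) i)‖)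
      Filter.atTop (nhds (‖T_L‖ * ‖f‖)) :=
    (hsum.norm.const_mul ‖T_L‖)
  refine le_of_tendsto_of_tendsto' h1 h2 (fun s => key _ ?_)
  apply Set.Finite.subset s.finite_toSet
  intro j hj
  by_contra hjs
  apply hj
  rw [lp.coeFn_sum, Finset.sum_apply]
  apply Finset.sum_eq_zero
  intro i hi
  exact lp.single_apply_ne 2 i _ (fun h => hjs (h ▸ hi))

end Analytic

/-- compatible local kernels over two members of a URS induce bounded
operators of equal norm. -/
theorem compatible_local_kernels_have_equal_operator_norm
    {Γ : Type*} [Group Γ] (Q : Finset Γ)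
    (hgen : Subgroup.closure (Q : Set Γ) = ⊤)
    (hsym : ∀ s ∈ Q, s⁻¹ ∈ Q)
    (Z : Set (Subgroup Γ)) (hZ : IsURS Z)
    (H L : Subgroup Γ) (hH : H ∈ Z) (hL : L ∈ Z) (R : ℕ)
    (K_H : (Γ ⧸ H) → (Γ ⧸ H) → ℂ) (K_L : (Γ ⧸ L) → (Γ ⧸ L) → ℂ)
    (hKH : IsLocalKernel Q H R K_H) (hKL : IsLocalKernel Q L R K_L)
    (hcompat : ∀ (x : Γ ⧸ H) (y : Γ ⧸ L), BallIso Q H L R x y →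
      ∀ w ∈ WordLe Q R, K_H x (w • x) = K_L y (w • y))
    (T_H : lp (fun _ : Γ ⧸ H => ℂ) 2 →L[ℂ] lp (fun _ : Γ ⧸ H => ℂ) 2)
    (T_L : lp (fun _ : Γ ⧸ L => ℂ) 2 →L[ℂ] lp (fun _ : Γ ⧸ L => ℂ) 2)
    (hTH : ∀ (f : lp (fun _ : Γ ⧸ H => ℂ) 2) (x : Γ ⧸ H),
      (T_H f : (Γ ⧸ H) → ℂ) x = ∑' y : Γ ⧸ H, K_H x y * (f : (Γ ⧸ H) → ℂ) y)
    (hTL : ∀ (f : lp (fun _ : Γ ⧸ L => ℂ) 2) (x : Γ ⧸ L),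
      (T_L f : (Γ ⧸ L) → ℂ) x = ∑' y : Γ ⧸ L, K_L x y * (f : (Γ ⧸ L) → ℂ) y) :
    ‖T_H‖ = ‖T_L‖ := by
  apply le_antisymm
  · exact opNorm_le_of_transport hgen hsym hKH hKL hcompat
      (fun x R' => exists_ballIso_of_URS hgen hsym hZ hH hL x R') T_H T_L hTH hTL
  · refine opNorm_le_of_transport hgen hsym hKL hKH ?_
      (fun y R' => exists_ballIso_of_URS hgen hsym hZ hL hH y R') T_L T_H hTL hTH
    intro y x hiso w hw
    obtain ⟨ψ, hψ⟩ := hiso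
    obtain ⟨φ, hφ, -, -⟩ := IsBI.symm hsym hψ
    exact (hcompat x y ⟨φ, hφ⟩ w hw).symm
end

section
/- Let G be a simple graph with all vertex degrees at most d, let k ≥ 1, and let x, y be adjacent vertices whose k-balls are finite with |B_k(x)| ≤ |B_k(y)|. Let ∂B_k(x) be the set of vertices of B_k(x) having a neighbor outside B_k(x), and set ρ = |∂B_k(x)|/|B_k(x)|. Then Σ_z (1_{B_k(y)}(z)/√|B_k(y)| − 1_{B_k(x)}(z)/√|B_k(x)|)² ≤ 2dρ + (1/√(2ρd+1) − 1)². -/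
/-- The `k`-ball around `v` in a simple graph. -/
def gball {V : Type*} (G : SimpleGraph V) (k : ℕ) (v : V) : Set V :=
  {u : V | G.Reachable v u ∧ G.dist v u ≤ k}

/-- The (inner) boundary of the `k`-ball around `v`: vertices of the ball having a
neighbor outside it. -/
def gboundary {V : Type*} (G : SimpleGraph V) (k : ℕ) (v : V) : Set V :=
  {u : V | u ∈ gball G k v ∧ ∃ w : V, G.Adj u w ∧ w ∉ gball G k v}

/-- Every vertex of `B_k(y) \ B_k(x)` (for `x ~ y`) is a neighbor of a boundary
vertex of `B_k(x)`. -/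
lemma diff_subset_nbhd_boundary {V : Type*} (G : SimpleGraph V) (k : ℕ)
    (x y : V) (hxy : G.Adj x y) :
    gball G k y \ gball G k x ⊆
      ⋃ w ∈ gboundary G k x, G.neighborSet w := by
  rintro z ⟨⟨hreach, hdist⟩, hz⟩
  have hrxz : G.Reachable x z := (hxy.reachable).trans hreach
  have hdx : k < G.dist x z := by
    by_contra h
    exact hz ⟨hrxz, le_of_not_gt h⟩
  -- dist x z ≤ 1 + dist y z ≤ 1 + k
  obtain ⟨q, hq⟩ := hreach.exists_walk_length_eq_dist
  have hle : G.dist x z ≤ k + 1 := by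
    have := G.dist_le (SimpleGraph.Walk.cons hxy q)
    simp only [SimpleGraph.Walk.length_cons, hq] at this
    omega
  have hdxz : G.dist x z = k + 1 := le_antisymm hle (by omega)
  obtain ⟨p, hp⟩ := hrxz.exists_walk_length_eq_dist
  rw [hdxz] at hp
  -- look at p from the z end
  have hp' : p.reverse.length = k + 1 := by rw [SimpleGraph.Walk.length_reverse]; exact hp
  cases hrev : p.reverse with
  | nil => rw [hrev] at hp'; simp at hp'
  | @cons _ w _ hadj q' =>
    rw [hrev] at hp'
    simp only [SimpleGraph.Walk.length_cons] at hp'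
    have hwk : G.dist x w ≤ k := by
      have := G.dist_le q'.reverse
      rw [SimpleGraph.Walk.length_reverse] at this
      omega
    have hwA : w ∈ gball G k x := ⟨SimpleGraph.Walk.reachable q'.reverse, hwk⟩
    refine Set.mem_biUnion (show w ∈ gboundary G k x from ⟨hwA, z, hadj.symm, hz⟩) ?_
    exact hadj.symm

set_option maxHeartbeats 1600000 in
/-- the normalized indicator functions of the `k`-balls around adjacent
vertices `x, y` satisfy the stated `ℓ²`-estimate in terms of the boundary ratio `ρ`. -/
theorem ball_indicator_l2_estimate
    {V : Type*} (G : SimpleGraph V) (d k : ℕ)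
    (hdeg : ∀ v : V, (G.neighborSet v).Finite ∧ (G.neighborSet v).ncard ≤ d)
    (hk : 1 ≤ k) (x y : V) (hxy : G.Adj x y)
    (hfx : (gball G k x).Finite) (hfy : (gball G k y).Finite)
    (hcard : (gball G k x).ncard ≤ (gball G k y).ncard)
    (ρ : ℝ) (hρ : ρ = ((gboundary G k x).ncard : ℝ) / ((gball G k x).ncard : ℝ)) :
    ∑' z : V,
      ((gball G k y).indicator (fun _ => (1 : ℝ)) z / Real.sqrt ((gball G k y).ncard) -
       (gball G k x).indicator (fun _ => (1 : ℝ)) z / Real.sqrt ((gball G k x).ncard)) ^ 2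
    ≤ 2 * d * ρ + (1 / Real.sqrt (2 * ρ * d + 1) - 1) ^ 2 := by
  classical
  set A := gball G k x with hA
  set B := gball G k y with hB
  have hbdfin : (gboundary G k x).Finite := hfx.subset (fun _ h => h.1)
  -- ℕ cardinalities
  set m : ℕ := (gboundary G k x).ncard with hm
  set a : ℕ := A.ncard with ha
  set b : ℕ := B.ncard with hb
  -- x ∈ A
  have hxA : x ∈ A := ⟨SimpleGraph.Reachable.refl x, by rw [SimpleGraph.dist_self]; omega⟩
  have hapos : 0 < a := Set.ncard_pos hfx |>.mpr ⟨x, hxA⟩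
  -- counting: |B \ A| ≤ d * m
  have hBA : (B \ A).ncard ≤ d * m := by
    have hfBA : (B \ A).Finite := hfy.diff
    have hsub := diff_subset_nbhd_boundary G k x y hxy
    have hsub' : hfBA.toFinset ⊆
        hbdfin.toFinset.biUnion (fun w => (hdeg w).1.toFinset) := by
      intro z hz
      rw [Set.Finite.mem_toFinset] at hz
      obtain ⟨w, hw, hzw⟩ := Set.mem_iUnion₂.mp (hsub hz)
      exact Finset.mem_biUnion.mpr ⟨w, (Set.Finite.mem_toFinset _).mpr hw,
        (Set.Finite.mem_toFinset _).mpr hzw⟩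
    calc (B \ A).ncard = hfBA.toFinset.card := Set.ncard_eq_toFinset_card _ hfBA
      _ ≤ (hbdfin.toFinset.biUnion (fun w => (hdeg w).1.toFinset)).card :=
          Finset.card_le_card hsub'
      _ ≤ hbdfin.toFinset.card * d := by
          apply Finset.card_biUnion_le_card_mul
          intro w _
          rw [← Set.ncard_eq_toFinset_card _ (hdeg w).1]
          exact (hdeg w).2
      _ = m * d := by rw [hm, Set.ncard_eq_toFinset_card _ hbdfin]
      _ = d * m := Nat.mul_comm _ _
  -- partitions
  have hpartA : (A \ B).ncard + (A ∩ B).ncard = a := by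
    rw [← Set.ncard_union_eq Set.disjoint_sdiff_inter (hfx.diff) (hfx.inter_of_left _),
      Set.diff_union_inter]
  have hpartB : (B \ A).ncard + (B ∩ A).ncard = b := by
    rw [← Set.ncard_union_eq Set.disjoint_sdiff_inter (hfy.diff) (hfy.inter_of_left _),
      Set.diff_union_inter]
  have hABBA : (A ∩ B) = (B ∩ A) := Set.inter_comm A B
  have hAB_le : (A \ B).ncard ≤ (B \ A).ncard := by
    rw [hABBA] at hpartA; omega
  have hInt_le : (A ∩ B).ncard ≤ a := by omega
  have hb_le : b ≤ a + d * m := by rw [hABBA] at hpartA; omega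
  -- evaluate the tsum as a finite sum
  set f : V → ℝ := fun z =>
    (B.indicator (fun _ => (1 : ℝ)) z / Real.sqrt b -
     A.indicator (fun _ => (1 : ℝ)) z / Real.sqrt a) ^ 2 with hf
  set sA := hfx.toFinset with hsA
  set sB := hfy.toFinset with hsB
  have htsum : ∑' z : V, f z = ∑ z ∈ sA ∪ sB, f z := by
    apply tsum_eq_sum
    intro z hz
    simp only [Finset.mem_union, hsA, hsB, Set.Finite.mem_toFinset] at hz
    push_neg at hz
    simp [hf, Set.indicator_of_notMem hz.1, Set.indicator_of_notMem hz.2]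
  -- split the finite sum
  have hunion : sA ∪ sB = (sA ∩ sB) ∪ (sB \ sA) ∪ (sA \ sB) := by
    ext z; simp only [Finset.mem_union, Finset.mem_inter, Finset.mem_sdiff]; tauto
  have hd1 : Disjoint ((sA ∩ sB) ∪ (sB \ sA)) (sA \ sB) := by
    rw [Finset.disjoint_left]
    intro z hz hz2
    simp only [Finset.mem_union, Finset.mem_inter, Finset.mem_sdiff] at hz hz2
    tauto
  have hd2 : Disjoint (sA ∩ sB) (sB \ sA) := by
    rw [Finset.disjoint_left]
    intro z hz hz2
    simp only [Finset.mem_inter, Finset.mem_sdiff] at hz hz2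
    tauto
  -- real abbreviations
  set α : ℝ := (a : ℝ) with hα
  set β : ℝ := (b : ℝ) with hβ
  have hα0 : 0 < α := by rw [hα]; exact_mod_cast hapos
  have hβ0 : 0 < β := by rw [hβ]; exact_mod_cast lt_of_lt_of_le hapos hcard
  have hsa0 : 0 < Real.sqrt α := Real.sqrt_pos.mpr hα0
  have hsb0 : 0 < Real.sqrt β := Real.sqrt_pos.mpr hβ0
  -- values of f on the pieces
  have hfInt : ∀ z ∈ sA ∩ sB, f z = (1 / Real.sqrt β - 1 / Real.sqrt α) ^ 2 := by
    intro z hz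
    simp only [Finset.mem_inter, hsA, hsB, Set.Finite.mem_toFinset] at hz
    simp [hf, Set.indicator_of_mem hz.1, Set.indicator_of_mem hz.2, hα, hβ]
  have hfBA : ∀ z ∈ sB \ sA, f z = 1 / β := by
    intro z hz
    simp only [Finset.mem_sdiff, hsA, hsB, Set.Finite.mem_toFinset] at hz
    simp only [hf, Set.indicator_of_mem hz.1, Set.indicator_of_notMem hz.2]
    rw [zero_div, sub_zero, div_pow, one_pow, Real.sq_sqrt hβ0.le]
  have hfAB : ∀ z ∈ sA \ sB, f z = 1 / α := by
    intro z hz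
    simp only [Finset.mem_sdiff, hsA, hsB, Set.Finite.mem_toFinset] at hz
    simp only [hf, Set.indicator_of_mem hz.1, Set.indicator_of_notMem hz.2]
    rw [zero_div, zero_sub, neg_sq, div_pow, one_pow, Real.sq_sqrt hα0.le]
  -- cardinalities of the pieces
  have hcInt : (sA ∩ sB).card = (A ∩ B).ncard := by
    rw [Set.ncard_eq_toFinset_card _ (hfx.inter_of_left B)]
    congr 1
    ext z
    simp [hsA, hsB, Set.Finite.mem_toFinset]
  have hcBA : (sB \ sA).card = (B \ A).ncard := by
    rw [Set.ncard_eq_toFinset_card _ (hfy.diff)]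
    congr 1
    ext z
    simp [hsA, hsB, Set.Finite.mem_toFinset]
  have hcAB : (sA \ sB).card = (A \ B).ncard := by
    rw [Set.ncard_eq_toFinset_card _ (hfx.diff)]
    congr 1
    ext z
    simp [hsA, hsB, Set.Finite.mem_toFinset]
  have hsum : ∑ z ∈ sA ∪ sB, f z =
      ((A ∩ B).ncard : ℝ) * (1 / Real.sqrt β - 1 / Real.sqrt α) ^ 2 +
      ((B \ A).ncard : ℝ) * (1 / β) + ((A \ B).ncard : ℝ) * (1 / α) := by
    rw [hunion, Finset.sum_union hd1, Finset.sum_union hd2,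
      Finset.sum_congr rfl hfInt, Finset.sum_congr rfl hfBA, Finset.sum_congr rfl hfAB,
      Finset.sum_const, Finset.sum_const, Finset.sum_const, hcInt, hcBA, hcAB]
    push_cast
    ring
  rw [htsum, hsum]
  -- now pure real arithmetic
  have hρ0 : 0 ≤ ρ := hρ ▸ div_nonneg (Nat.cast_nonneg _) hα0.le
  have hmρ : (m : ℝ) = ρ * α := by
    rw [hρ]; field_simp [hα]
  -- bound the two tail terms
  have htail : ((B \ A).ncard : ℝ) * (1 / β) + ((A \ B).ncard : ℝ) * (1 / α)
      ≤ 2 * d * ρ := by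
    have h1 : ((B \ A).ncard : ℝ) ≤ (d : ℝ) * m := by exact_mod_cast hBA
    have h2 : ((A \ B).ncard : ℝ) ≤ (d : ℝ) * m := by
      calc ((A \ B).ncard : ℝ) ≤ ((B \ A).ncard : ℝ) := by exact_mod_cast hAB_le
        _ ≤ (d : ℝ) * m := h1
    have hβα : 1 / β ≤ 1 / α := one_div_le_one_div_of_le hα0 (by rw [hα, hβ]; exact_mod_cast hcard)
    have e1 : ((B \ A).ncard : ℝ) * (1 / β) ≤ (d : ℝ) * m * (1 / α) := by
      apply mul_le_mul h1 hβα (by positivity) (by positivity)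
    have e2 : ((A \ B).ncard : ℝ) * (1 / α) ≤ (d : ℝ) * m * (1 / α) := by
      apply mul_le_mul_of_nonneg_right h2 (by positivity)
    have : (d : ℝ) * m * (1 / α) = (d : ℝ) * ρ := by
      rw [hmρ]; field_simp
    nlinarith [e1, e2]
  -- bound the main term
  have hmain : ((A ∩ B).ncard : ℝ) * (1 / Real.sqrt β - 1 / Real.sqrt α) ^ 2
      ≤ (1 / Real.sqrt (2 * ρ * d + 1) - 1) ^ 2 := by
    set u : ℝ := Real.sqrt (2 * ρ * d + 1) with hu
    have h2ρd : (0:ℝ) ≤ 2 * ρ * d :=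
      mul_nonneg (mul_nonneg (by norm_num) hρ0) (Nat.cast_nonneg d)
    have hu1 : 1 ≤ u := by
      rw [hu]
      nlinarith [Real.sq_sqrt (show (0:ℝ) ≤ 2 * ρ * ↑d + 1 by linarith),
        Real.sqrt_nonneg (2 * ρ * ↑d + 1), sq_nonneg (Real.sqrt (2 * ρ * ↑d + 1) - 1)]
    have hu0 : 0 < u := lt_of_lt_of_le one_pos hu1
    have hu2 : u ^ 2 = 2 * ρ * d + 1 := Real.sq_sqrt (by linarith)
    -- β ≤ α * u^2
    have hβu : β ≤ α * u ^ 2 := by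
      rw [hu2]
      have hble : β ≤ α + (d : ℝ) * m := by rw [hβ, hα]; exact_mod_cast hb_le
      rw [hmρ] at hble
      nlinarith [mul_nonneg (mul_nonneg hρ0 (Nat.cast_nonneg d)) hα0.le, hble]
    -- step 1: pull out α
    have hstep : ((A ∩ B).ncard : ℝ) * (1 / Real.sqrt β - 1 / Real.sqrt α) ^ 2
        ≤ α * (1 / Real.sqrt β - 1 / Real.sqrt α) ^ 2 := by
      apply mul_le_mul_of_nonneg_right _ (by positivity)
      rw [hα]
      exact_mod_cast hInt_le
    have hexp : α * (1 / Real.sqrt β - 1 / Real.sqrt α) ^ 2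
        = (Real.sqrt α / Real.sqrt β - 1) ^ 2 := by
      have h' : Real.sqrt α / Real.sqrt β - 1
          = Real.sqrt α * (1 / Real.sqrt β - 1 / Real.sqrt α) := by
        field_simp
      rw [h', mul_pow, Real.sq_sqrt hα0.le]
    -- t := √α/√β satisfies 1/u ≤ t ≤ 1
    have hab : Real.sqrt α ≤ Real.sqrt β :=
      Real.sqrt_le_sqrt (by rw [hα, hβ]; exact_mod_cast hcard)
    have ht1 : Real.sqrt α / Real.sqrt β ≤ 1 := by
      rw [div_le_one hsb0]; exact hab
    have ht2 : 1 / u ≤ Real.sqrt α / Real.sqrt β := by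
      rw [div_le_div_iff₀ hu0 hsb0]
      have : Real.sqrt β ≤ Real.sqrt (α * u ^ 2) := Real.sqrt_le_sqrt hβu
      calc 1 * Real.sqrt β ≤ Real.sqrt (α * u ^ 2) := by rw [one_mul]; exact this
        _ = Real.sqrt α * u := by
            rw [Real.sqrt_mul hα0.le, Real.sqrt_sq hu0.le]
    have hu1' : 1 / u ≤ 1 := by
      rw [div_le_one hu0]; exact hu1
    have : (Real.sqrt α / Real.sqrt β - 1) ^ 2 ≤ (1 / u - 1) ^ 2 := by
      nlinarith [ht1, ht2, hu1']
    linarith [hstep, hexp ▸ hstep, this, hexp.le, hexp.ge]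
  linarith [hmain, htail]
end
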